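/- For n ≥ 2 and any set T of 2^{n-1} vectors in (Fin n → Bool), there exists an even permutation π of (Fin n → Bool) mapping every element of T into the set of vectors with first coordinate false; hence a test set complete for all circuits over a gate library computing exactly the even permutations must have at least 2^{n-1}+1 vectors. -/

import Mathlib

section Aux
variable {n : ℕ}

private def flip0 (i0 : Fin n) : Equiv.Perm (Fin n → Bool) :=
  Function.Involutive.toPerm
    (fun v => Function.update v i0 (!(v i0)))
    (by
      intro v
      funext j
      by_cases h : j = i0
      · subst h; simp [Function.update_self]
      · simp [Function.update_of_ne h])

lemma aux_half_card (hn : 1 ≤ n) (i0 : Fin n) :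
    (Finset.univ.filter (fun v : Fin n → Bool => v i0 = false)).card = 2 ^ (n - 1) := by
  set H := Finset.univ.filter (fun v : Fin n → Bool => v i0 = false) with hH
  set K := Finset.univ.filter (fun v : Fin n → Bool => v i0 = true) with hK
  have himg : K = H.image (flip0 i0) := by
    ext w
    simp only [hH, hK, Finset.mem_image, Finset.mem_filter, Finset.mem_univ, true_and]
    constructor
    · intro hw
      refine ⟨flip0 i0 w, ?_, ?_⟩
      · show (Function.update w i0 (!(w i0))) i0 = false
        simp [hw]
      · exact (flip0 i0).left_inv w
    · rintro ⟨v, hv, rfl⟩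
      show (Function.update v i0 (!(v i0))) i0 = true
      simp [hv]
  have hcardK : K.card = H.card := by
    rw [himg, Finset.card_image_of_injective _ (flip0 i0).injective]
  have hKc : K = Hᶜ := by
    ext v
    simp only [hH, hK, Finset.mem_compl, Finset.mem_filter, Finset.mem_univ, true_and]
    cases h : v i0 <;> simp
  have hsum : H.card + K.card = 2 ^ n := by
    rw [hKc, Finset.card_add_card_compl, Fintype.card_fun]
    simp
  have h2 : 2 * H.card = 2 * 2 ^ (n - 1) := by
    have : (2:ℕ) * 2 ^ (n-1) = 2 ^ n := by
      rw [← pow_succ']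
      congr 1
      omega
    omega
  omega

lemma aux_part1 (hn : 2 ≤ n) (i0 : Fin n) (T : Finset (Fin n → Bool))
    (hT : T.card = 2 ^ (n - 1)) :
    ∃ π : Equiv.Perm (Fin n → Bool), Equiv.Perm.sign π = 1 ∧
      ∀ t ∈ T, π t i0 = false := by
  classical
  set H := Finset.univ.filter (fun v : Fin n → Bool => v i0 = false) with hH
  have hHcard : H.card = 2 ^ (n - 1) := aux_half_card (by omega) i0
  have hcards : T.card = H.card := by rw [hT, hHcard]
  have e1 : {v // v ∈ T} ≃ {v // v ∈ H} := Finset.equivOfCardEq hcards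
  have e2 : {v // v ∉ T} ≃ {v // v ∉ H} := by
    apply Fintype.equivOfCardEq
    rw [Fintype.card_subtype_compl, Fintype.card_subtype_compl,
      Fintype.card_coe, Fintype.card_coe, hcards]
  let σ : Equiv.Perm (Fin n → Bool) :=
    ((Equiv.sumCompl (· ∈ T)).symm.trans (Equiv.sumCongr e1 e2)).trans
      (Equiv.sumCompl (· ∈ H))
  have hσ : ∀ t ∈ T, σ t ∈ H := by
    intro t ht
    have : σ t = (e1 ⟨t, ht⟩ : Fin n → Bool) := by
      simp only [σ, Equiv.trans_apply]
      rw [Equiv.sumCompl_symm_apply_of_pos ht]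
      simp
    rw [this]
    exact (e1 ⟨t, ht⟩).2
  -- fix parity
  have hH2 : 1 < H.card := by
    rw [hHcard]
    have : (2:ℕ)^1 ≤ 2 ^ (n-1) := Nat.pow_le_pow_right (by norm_num) (by omega)
    omega
  obtain ⟨a, ha, b, hb, hab⟩ := Finset.one_lt_card.mp hH2
  rcases Int.units_eq_one_or (Equiv.Perm.sign σ) with hs | hs
  · refine ⟨σ, hs, fun t ht => ?_⟩
    have := hσ t ht
    rw [hH, Finset.mem_filter] at this
    exact this.2
  · refine ⟨Equiv.swap a b * σ, ?_, fun t ht => ?_⟩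
    · rw [map_mul, Equiv.Perm.sign_swap hab, hs]; norm_num
    · have hin : σ t ∈ H := hσ t ht
      have : Equiv.swap a b (σ t) ∈ H := by
        rcases eq_or_ne (σ t) a with h | h
        · rw [h, Equiv.swap_apply_left]; exact hb
        rcases eq_or_ne (σ t) b with h' | h'
        · rw [h', Equiv.swap_apply_right]; exact ha
        · rw [Equiv.swap_apply_of_ne_of_ne h h']; exact hin
      rw [hH, Finset.mem_filter] at this
      exact this.2

end Aux

/-- for `n ≥ 2`, every set of `2^(n-1)` vectors can be mapped by some
*even* permutation of `(Fin n → Bool)` into the vectors with first coordinate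
`false`; hence a test set complete for all circuits over a gate library computing
exactly the even permutations has at least `2^(n-1) + 1` vectors. -/
theorem stmt14 {n : ℕ} (hn : 2 ≤ n) :
    (∀ T : Finset (Fin n → Bool), T.card = 2 ^ (n - 1) →
      ∃ π : Equiv.Perm (Fin n → Bool), Equiv.Perm.sign π = 1 ∧
        ∀ t ∈ T, π t ⟨0, by omega⟩ = false) ∧
    (∀ T : Finset (Fin n → Bool),
      (∀ π : Equiv.Perm (Fin n → Bool), Equiv.Perm.sign π = 1 →
        ∀ j : Fin n, (∃ t ∈ T, π t j = true) ∧ (∃ t ∈ T, π t j = false)) →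
      2 ^ (n - 1) + 1 ≤ T.card) := by
  constructor
  · intro T hT
    exact aux_part1 hn ⟨0, by omega⟩ T hT
  · intro T hcomplete
    by_contra hlt
    push_neg at hlt
    have hTle : T.card ≤ 2 ^ (n - 1) := by omega
    obtain ⟨T', hsub, hT'⟩ := Finset.exists_superset_card_eq hTle
      (by
        rw [Fintype.card_fun]
        simp only [Fintype.card_fin, Fintype.card_bool]
        exact Nat.pow_le_pow_right (by norm_num) (by omega))
    obtain ⟨π, hsign, hπ⟩ := aux_part1 hn ⟨0, by omega⟩ T' hT'
    obtain ⟨⟨t, ht, htrue⟩, -⟩ := hcomplete π hsign ⟨0, by omega⟩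
    have := hπ t (hsub ht)
    rw [this] at htrue
    exact Bool.false_ne_true htrue
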